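/- For n ≥ 2 and 0 < τ ≤ 1/4 define A_n(τ) := [ (−1)^{n+1}·nπ/(4·q₁(τ)^{n+1}) − (1/2)(1/2 + 2πi/τ^2)·i^n/(1 − i·q₁(τ))^n ] / ( π·(iτ^2)^{n−1} ), which equals φ⁽ⁿ⁾(q₁(τ),τ)/(π (iτ^2)^{n−1} (n−1)!) where φ⁽ⁿ⁾ is the n-th derivative of φ(·,τ). Then for every ε > 0 there exists τ₀ ∈ (0,1/4] such that for all τ ∈ (0,τ₀) and all integers n ≥ 2 one has |A_n(τ)| ≤ (1+ε)^n. -/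

import Mathlib

set_option maxHeartbeats 1000000
open Real Complex

noncomputable def Ppoly (τ : ℝ) (z : ℂ) : ℂ :=
  z ^ 3 + (Complex.I - 1 / (4 * (π : ℂ)) - Complex.I / (τ : ℂ) ^ 2) * z ^ 2
    - z / 4 - Complex.I / 4

/-- The normalized Taylor coefficients `A_n(τ)` of `φ` at the saddle `q₁`. -/
noncomputable def A1 (q₁ : ℝ → ℂ) (n : ℕ) (τ : ℝ) : ℂ :=
  ((-1 : ℂ) ^ (n + 1) * (n : ℂ) * (π : ℂ) / (4 * q₁ τ ^ (n + 1)) -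
      (1 / 2 : ℂ) * (1 / 2 + 2 * (π : ℂ) * Complex.I / (τ : ℂ) ^ 2) *
        Complex.I ^ n / (1 - Complex.I * q₁ τ) ^ n) /
    ((π : ℂ) * (Complex.I * (τ : ℂ) ^ 2) ^ (n - 1))

lemma elem_ineq (t β : ℝ) (n : ℕ) (hn : 2 ≤ n) (ht0 : 0 < t) (ht : 8*t ≤ β) (hβ : β ≤ 1) :
    (n:ℝ)*t^2/(4*(1-2*t)^(n+1)) + (1+t)/(1-t)^n ≤ (1+3*β)^n := by
  have hβ0 : 0 < β := by linarith
  have ht1 : t ≤ 1/8 := by linarith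
  have h2t : (0:ℝ) < 1 - 2*t := by linarith
  have h1t : (0:ℝ) < 1 - t := by linarith
  have hn' : (2:ℝ) ≤ (n:ℝ) := by exact_mod_cast hn
  -- Term 1
  have p1 : (1:ℝ) ≤ (1-2*t)^(n+1)*(1+4*t)^(n+1) := by
    rw [← mul_pow]
    calc (1:ℝ) = 1^(n+1) := (one_pow _).symm
    _ ≤ ((1-2*t)*(1+4*t))^(n+1) := pow_le_pow_left₀ zero_le_one (by nlinarith) _
  have t1 : (n:ℝ)*t^2/(4*(1-2*t)^(n+1)) ≤ (n:ℝ)*t^2*(1+4*t)^(n+1)/4 := by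
    rw [div_le_div_iff₀ (by positivity) (by norm_num)]
    nlinarith [mul_le_mul_of_nonneg_left p1 (show (0:ℝ) ≤ (n:ℝ)*t^2*4 by positivity)]
  have t1b : (n:ℝ)*t^2*(1+4*t)^(n+1)/4 ≤ (n:ℝ)*β*(1+β)^n := by
    have h4 : (1+4*t)^(n+1) ≤ (1+β)^(n+1) := pow_le_pow_left₀ (by linarith) (by linarith) _
    have h5 : (1+β)^(n+1) = (1+β)*(1+β)^n := by ring
    have h6 : (1+β)*(1+β)^n ≤ 2*(1+β)^n :=
      mul_le_mul_of_nonneg_right (by linarith) (by positivity)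
    have h7 : (1+4*t)^(n+1) ≤ 2*(1+β)^n := by rw [h5] at h4; linarith
    have h8 : (n:ℝ)*t^2*(1+4*t)^(n+1) ≤ (n:ℝ)*t^2*(2*(1+β)^n) :=
      mul_le_mul_of_nonneg_left h7 (by positivity)
    have h9 : t^2 ≤ 2*β := by nlinarith
    have h10 : (n:ℝ)*t^2*(2*(1+β)^n) ≤ 4*((n:ℝ)*β*(1+β)^n) := by
      have := pow_pos (show (0:ℝ) < 1+β by linarith) n
      nlinarith [mul_le_mul_of_nonneg_left h9 (show (0:ℝ) ≤ (n:ℝ)*(1+β)^n by positivity)]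
    linarith
  -- Term 2
  have p2 : (1:ℝ) ≤ (1-t)^n*(1+2*t)^n := by
    rw [← mul_pow]
    calc (1:ℝ) = 1^n := (one_pow _).symm
    _ ≤ ((1-t)*(1+2*t))^n := pow_le_pow_left₀ zero_le_one (by nlinarith) _
  have t2 : (1+t)/(1-t)^n ≤ (1+t)*(1+2*t)^n := by
    rw [div_le_iff₀ (by positivity)]
    nlinarith [mul_le_mul_of_nonneg_left p2 (show (0:ℝ) ≤ 1+t by linarith)]
  have t2b : (1+t)*(1+2*t)^n ≤ (1+β)^n := by
    have h4 : (1+t)*(1+2*t)^n ≤ (1+2*t)*(1+2*t)^n :=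
      mul_le_mul_of_nonneg_right (by linarith) (by positivity)
    have h5 : (1+2*t)*(1+2*t)^n = (1+2*t)^(n+1) := by ring
    have h6 : (1+2*t)^(n+1) ≤ (1+β/4)^(n+1) := pow_le_pow_left₀ (by linarith) (by linarith) _
    have h7 : (1+β/4)^(n+1) ≤ (1+β/4)^(2*n) := pow_le_pow_right₀ (by linarith) (by omega)
    have h8 : (1+β/4)^(2*n) = ((1+β/4)^2)^n := by rw [pow_mul]
    have h9 : ((1+β/4)^2)^n ≤ (1+β)^n := pow_le_pow_left₀ (by positivity) (by nlinarith) _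
    calc (1+t)*(1+2*t)^n ≤ (1+2*t)^(n+1) := by rw [← h5]; exact h4
    _ ≤ (1+β/4)^(2*n) := le_trans h6 h7
    _ ≤ (1+β)^n := by rw [h8]; exact h9
  -- combine
  have hsum : (n:ℝ)*β*(1+β)^n + (1+β)^n ≤ (1+3*β)^n := by
    have h1 : (n:ℝ)*β*(1+β)^n + (1+β)^n = (1+(n:ℝ)*β)*(1+β)^n := by ring
    have h2 : 1+(n:ℝ)*β ≤ (1+β)^n := by
      have := one_add_mul_le_pow (show (-2:ℝ) ≤ β by linarith) n
      linarith
    have h3 : (1+(n:ℝ)*β)*(1+β)^n ≤ (1+β)^n*(1+β)^n :=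
      mul_le_mul_of_nonneg_right h2 (by positivity)
    have h4 : (1+β)^n*(1+β)^n = ((1+β)^2)^n := by rw [← pow_add, ← two_mul, pow_mul]
    have h4b : (1+β)^2 ≤ 1+3*β := by nlinarith
    have h5 : ((1+β)^2)^n ≤ (1+3*β)^n := pow_le_pow_left₀ (by positivity) h4b _
    calc (n:ℝ)*β*(1+β)^n + (1+β)^n = (1+(n:ℝ)*β)*(1+β)^n := h1
    _ ≤ (1+β)^n*(1+β)^n := h3
    _ ≤ (1+3*β)^n := by rw [h4]; exact h5
  linarith

theorem statement14 (q₁ : ℝ → ℂ)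
    (hq₁ : ∀ τ : ℝ, 0 < τ → τ ≤ 1 / 4 →
      ‖q₁ τ - (Complex.I / (τ : ℂ) ^ 2 + 1 / (4 * (π : ℂ)) - Complex.I)‖
          ≤ τ ^ 2 / 2 ∧ Ppoly τ (q₁ τ) = 0)
    (ε : ℝ) (hε : 0 < ε) :
    ∃ τ₀ : ℝ, 0 < τ₀ ∧ τ₀ ≤ 1 / 4 ∧
      ∀ τ : ℝ, 0 < τ → τ < τ₀ → ∀ n : ℕ, 2 ≤ n →
        ‖A1 q₁ n τ‖ ≤ (1 + ε) ^ n := by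
  set β : ℝ := min (ε/3) 1 with hβdef
  have hβ0 : 0 < β := lt_min (by linarith) one_pos
  have hβ1 : β ≤ 1 := min_le_right _ _
  have hβε : 3*β ≤ ε := by
    rcases le_or_gt (ε/3) 1 with h|h
    · rw [hβdef, min_eq_left h]; linarith
    · rw [hβdef, min_eq_right h.le]; linarith
  refine ⟨min (1/4) (Real.sqrt (β/8)), lt_min (by norm_num)
    (Real.sqrt_pos.mpr (by linarith)), min_le_left _ _, ?_⟩
  intro τ hτ0 hττ0 n hn
  have hτ4 : τ ≤ 1/4 := le_of_lt (lt_of_lt_of_le hττ0 (min_le_left _ _))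
  have hτs : τ < Real.sqrt (β/8) := lt_of_lt_of_le hττ0 (min_le_right _ _)
  have ht8 : 8 * τ^2 ≤ β := by
    have h1 : τ^2 < (Real.sqrt (β/8))^2 := by
      apply pow_lt_pow_left₀ hτs hτ0.le
      norm_num
    rw [Real.sq_sqrt (by linarith : (0:ℝ) ≤ β/8)] at h1
    linarith
  set t := τ^2 with htdef
  have ht0 : 0 < t := by positivity
  have ht16 : t ≤ 1/16 := by rw [htdef]; nlinarith
  have htβ : 8*t ≤ β := ht8
  obtain ⟨habs, -⟩ := hq₁ τ hτ0 hτ4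
  set q := q₁ τ with hqdef
  set c : ℂ := Complex.I / (τ : ℂ) ^ 2 + 1 / (4 * (π : ℂ)) - Complex.I with hcdef
  have hπ0 : (0:ℝ) < π := Real.pi_pos
  have hπ3 : (3:ℝ) < π := Real.pi_gt_three
  have hτC : ((τ:ℂ))^2 ≠ 0 := pow_ne_zero _ (Complex.ofReal_ne_zero.mpr hτ0.ne')
  have hπC : (π:ℂ) ≠ 0 := by exact_mod_cast hπ0.ne'
  -- rewrite c
  have hc1 : c = ((1/t - 1 : ℝ):ℂ) * Complex.I + ((1/(4*π) : ℝ):ℂ) := by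
    rw [hcdef, htdef]
    push_cast
    field_simp
    ring
  have habs' : ‖q - c‖ ≤ t/2 := habs
  have h16t : (16:ℝ) ≤ 1/t := by rw [le_div_iff₀ ht0]; linarith
  -- lower bound for |q|
  have h1 : ‖((1/t - 1 : ℝ):ℂ) * Complex.I‖ = 1/t - 1 := by
    rw [norm_mul, Complex.norm_I, Complex.norm_real, Real.norm_eq_abs, mul_one, _root_.abs_of_nonneg]
    linarith
  have h2 : ‖((1/(4*π) : ℝ):ℂ)‖ = 1/(4*π) := by
    rw [Complex.norm_real, Real.norm_eq_abs, _root_.abs_of_nonneg]; positivity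
  have hcabs : 1/t - 1 - 1/(4*π) ≤ ‖c‖ := by
    have h3 := norm_sub_le_norm_add (((1/t - 1 : ℝ):ℂ) * Complex.I) (((1/(4*π) : ℝ):ℂ))
    rw [h1, h2, ← hc1] at h3
    linarith
  have hqlb : 1/t - 1 - 1/(4*π) - t/2 ≤ ‖q‖ := by
    have h4 := norm_sub_le_norm_add c (q - c)
    have h5 : c + (q - c) = q := by ring
    rw [h5] at h4
    rw [norm_sub_rev] at habs'
    linarith
  have hq : 1 - 2*t ≤ t * ‖q‖ := by
    have h6 := mul_le_mul_of_nonneg_left hqlb ht0.le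
    have he : t * (1/t - 1 - 1/(4*π) - t/2) = 1 - t - t/(4*π) - t^2/2 := by
      field_simp
    rw [he] at h6
    have h7 : t/12 ≤ t/(4*π) → True := fun _ => trivial
    have h8 : t/(4*π) ≤ t/12 := by
      rw [div_le_div_iff₀ (by positivity) (by norm_num)]
      nlinarith
    nlinarith
  -- lower bound for |1 - I q|
  have hb1 : 1 - Complex.I*q = (((1/t):ℝ):ℂ) - ((1/(4*π) : ℝ):ℂ)*Complex.I - Complex.I*(q - c) := by
    rw [hcdef, htdef]
    push_cast
    linear_combination (1 - 1/(τ:ℂ)^2) * Complex.I_sq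
  have hbabs : 1/t - 1/(4*π) - t/2 ≤ ‖1 - Complex.I*q‖ := by
    have h1' : ‖(((1/t):ℝ):ℂ) - ((1/(4*π) : ℝ):ℂ)*Complex.I‖ ≥ 1/t - 1/(4*π) := by
      have := norm_sub_le_norm_add (((1/t:ℝ)):ℂ) (-(((1/(4*π) : ℝ):ℂ)*Complex.I))
      rw [← sub_eq_add_neg, norm_neg, norm_mul, Complex.norm_I, mul_one,
        Complex.norm_real, Real.norm_eq_abs, Complex.norm_real, Real.norm_eq_abs, _root_.abs_of_nonneg (by positivity : (0:ℝ) ≤ 1/t),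
        _root_.abs_of_nonneg (by positivity : (0:ℝ) ≤ 1/(4*π))] at this
      linarith
    have h2' := norm_sub_le_norm_add ((((1/t):ℝ):ℂ) - ((1/(4*π) : ℝ):ℂ)*Complex.I) (-(Complex.I*(q - c)))
    rw [← sub_eq_add_neg, ← hb1, norm_neg, norm_mul, Complex.norm_I, one_mul] at h2'
    linarith
  have hb : 1 - t ≤ t * ‖1 - Complex.I*q‖ := by
    have h6 := mul_le_mul_of_nonneg_left hbabs ht0.le
    have he : t * (1/t - 1/(4*π) - t/2) = 1 - t/(4*π) - t^2/2 := by
      field_simp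
    rw [he] at h6
    have h8 : t/(4*π) ≤ t/12 := by
      rw [div_le_div_iff₀ (by positivity) (by norm_num)]
      nlinarith
    nlinarith
  set a := ‖q‖ with hadef
  set b := ‖1 - Complex.I*q‖ with hbdef2
  have ha0 : 0 < a := by nlinarith
  have hb0 : 0 < b := by nlinarith
  set X := (-1 : ℂ) ^ (n + 1) * (n : ℂ) * (π : ℂ) / (4 * q ^ (n + 1)) with hXdef
  set Y := (1 / 2 : ℂ) * (1 / 2 + 2 * (π : ℂ) * Complex.I / (τ : ℂ) ^ 2) *
        Complex.I ^ n / (1 - Complex.I * q) ^ n with hYdef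
  have hA : A1 q₁ n τ = (X - Y) / ((π:ℂ) * (Complex.I * (τ:ℂ)^2)^(n-1)) := rfl
  have hτabs : ‖(τ:ℂ)^2‖ = t := by
    rw [norm_pow, Complex.norm_real, Real.norm_eq_abs, _root_.sq_abs, htdef]
  have hD : ‖(π:ℂ) * (Complex.I * (τ:ℂ)^2)^(n-1)‖ = π * t^(n-1) := by
    rw [norm_mul, norm_pow, norm_mul, Complex.norm_I, one_mul, hτabs,
      Complex.norm_real, Real.norm_eq_abs, _root_.abs_of_pos hπ0]
  have hX : ‖X‖ = (n:ℝ)*π/(4*a^(n+1)) := by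
    rw [hXdef, norm_div, norm_mul, norm_mul, norm_mul, norm_pow, norm_pow]
    simp [Complex.norm_natCast, Complex.norm_real, Real.norm_eq_abs, _root_.abs_of_pos hπ0, hadef]
  have hYc : ‖1/2 + 2*(π:ℂ)*Complex.I/(τ:ℂ)^2‖ ≤ 1/2 + 2*π/t := by
    refine (norm_add_le _ _).trans ?_
    have e1 : ‖(1:ℂ)/2‖ = 1/2 := by
      rw [norm_div]; simp
    have e2 : ‖2*(π:ℂ)*Complex.I/(τ:ℂ)^2‖ = 2*π/t := by
      rw [norm_div, norm_mul, norm_mul, Complex.norm_I, mul_one, hτabs,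
        Complex.norm_real, Real.norm_eq_abs, _root_.abs_of_pos hπ0]
      norm_num
    rw [e1, e2]
  have hY : ‖Y‖ ≤ (1/2)*(1/2+2*π/t)/b^n := by
    rw [hYdef, norm_div, norm_mul, norm_mul, norm_pow, norm_pow, Complex.norm_I, one_pow, mul_one]
    have e1 : ‖(1/2 : ℂ)‖ = 1/2 := by
      rw [norm_div]; simp
    rw [e1]
    gcongr
  have hnum : ‖X - Y‖ ≤ (n:ℝ)*π/(4*a^(n+1)) + (1/2)*(1/2+2*π/t)/b^n := by
    refine (norm_sub_le _ _).trans ?_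
    rw [hX]
    linarith
  have h1 : (n:ℝ)*π/(4*a^(n+1)) ≤ ((n:ℝ)*t^2/(4*(1-2*t)^(n+1))) * (π*t^(n-1)) := by
    have h2t : (0:ℝ) < 1-2*t := by linarith
    rw [div_mul_eq_mul_div, div_le_div_iff₀ (by positivity) (mul_pos (by norm_num) (pow_pos h2t (n+1)))]
    have hpow : (1-2*t)^(n+1) ≤ t^(n+1)*a^(n+1) := by
      rw [← mul_pow]
      exact pow_le_pow_left₀ (by linarith) hq _
    have htt : t^(n+1) = t^2 * t^(n-1) := by
      rw [← pow_add]; congr 1; omega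
    calc (n:ℝ)*π*(4*(1-2*t)^(n+1)) ≤ (n:ℝ)*π*(4*(t^(n+1)*a^(n+1))) := by
          have hnn : (0:ℝ) ≤ (n:ℝ)*π*4 := by positivity
          nlinarith [mul_le_mul_of_nonneg_left hpow hnn]
      _ = (n:ℝ)*t^2*(π*t^(n-1))*(4*a^(n+1)) := by rw [htt]; ring
  have h2 : (1/2)*(1/2+2*π/t)/b^n ≤ ((1+t)/(1-t)^n) * (π*t^(n-1)) := by
    have h1t : (0:ℝ) < 1 - t := by linarith
    rw [show ((1+t)/(1-t)^n) * (π*t^(n-1)) = (1+t)*(π*t^(n-1))/(1-t)^n by ring,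
      div_le_div_iff₀ (pow_pos hb0 n) (pow_pos h1t n)]
    have hpow : (1-t)^n ≤ t^n*b^n := by
      rw [← mul_pow]
      exact pow_le_pow_left₀ (by linarith) hb _
    have htt : t^n = t * t^(n-1) := by
      rw [← pow_succ']; congr 1; omega
    have hc2 : (0:ℝ) ≤ 1/2*(1/2+2*π/t) := by positivity
    calc 1/2*(1/2+2*π/t)*(1-t)^n ≤ 1/2*(1/2+2*π/t)*(t^n*b^n) :=
          mul_le_mul_of_nonneg_left hpow hc2
      _ = (t/4+π)*(t^(n-1)*b^n) := by rw [htt]; field_simp; ring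
      _ ≤ (π+π*t)*(t^(n-1)*b^n) := by
          have : t/4 + π ≤ π + π*t := by nlinarith
          exact mul_le_mul_of_nonneg_right this (by positivity)
      _ = (1+t)*(π*t^(n-1))*b^n := by ring
  have hεβ : 1 + 3*β ≤ 1 + ε := by linarith
  calc ‖A1 q₁ n τ‖ = ‖X - Y‖ / (π*t^(n-1)) := by
        rw [hA, norm_div, hD]
    _ ≤ ((n:ℝ)*π/(4*a^(n+1)) + (1/2)*(1/2+2*π/t)/b^n)/(π*t^(n-1)) := by
        gcongr
    _ ≤ (n:ℝ)*t^2/(4*(1-2*t)^(n+1)) + (1+t)/(1-t)^n := by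
        rw [div_le_iff₀ (by positivity), add_mul]
        linarith
    _ ≤ (1+3*β)^n := elem_ineq t β n hn ht0 htβ hβ1
    _ ≤ (1+ε)^n := pow_le_pow_left₀ (by linarith) hεβ n
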